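/- Let H be a real separable Hilbert space and let S ⊆ H be a nonempty closed uniformly subsmooth set with S ≠ H. Then for every ε ∈ (0,1) there exists ρ ∈ (0,∞) such that √(1−ε) ≤ inf_{y ∈ U_ρ(S)} d(0, ∂d_S(y)), where U_ρ(S) := {x ∈ H : 0 < d_S(x) < ρ} and ∂d_S(y) is the Clarke subdifferential of the distance function d_S at y. -/

import Mathlib

open Metric Set MeasureTheory Filter Pointwise

noncomputable section

variable {H : Type} [NormedAddCommGroup H] [InnerProductSpace ℝ H]

/-- The Clarke generalized directional derivative of `f` at `x` in direction `h`. -/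
def clarkeDeriv (f : H → ℝ) (x h : H) : ℝ :=
  Filter.limsup (fun p : H × ℝ => (f (p.1 + p.2 • h) - f p.1) / p.2)
    ((nhds x) ×ˢ (nhdsWithin 0 (Ioi (0:ℝ))))

/-- The Clarke subdifferential of `f` at `x`. -/
def clarkeSubdiff (f : H → ℝ) (x : H) : Set H :=
  {v : H | ∀ h : H, (inner ℝ v h : ℝ) ≤ clarkeDeriv f x h}

/-- The closure of a set with respect to the weak topology of `H`. -/
def weakClosure (A : Set H) : Set H :=
  (toWeakSpace ℝ H) ⁻¹' (closure ((toWeakSpace ℝ H) '' A))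

/-- The Clarke normal cone to `S` at `x`: the weak closure of `ℝ₊ ∂d_S(x)`. -/
def clarkeNormalCone (S : Set H) (x : H) : Set H :=
  weakClosure {w : H | ∃ l : ℝ, ∃ v ∈ clarkeSubdiff (fun u => infDist u S) x,
    0 ≤ l ∧ w = l • v}

/-- The (possibly empty) set of nearest points of `x` in `S`. -/
def projSet (S : Set H) (x : H) : Set H :=
  {y ∈ S | ‖x - y‖ = infDist x S}

/-- A family of closed sets is equi-uniformly subsmooth. -/
def EquiUniformlySubsmooth {ι : Sort*} (S : ι → Set H) : Prop :=
  ∀ ε > (0:ℝ), ∃ δ > (0:ℝ), ∀ j : ι, ∀ x₁ ∈ S j, ∀ x₂ ∈ S j, ‖x₁ - x₂‖ < δ →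
    ∀ v₁ ∈ clarkeNormalCone (S j) x₁ ∩ closedBall 0 1,
    ∀ v₂ ∈ clarkeNormalCone (S j) x₂ ∩ closedBall 0 1,
      -ε * ‖x₁ - x₂‖ ≤ (inner ℝ (v₁ - v₂) (x₁ - x₂) : ℝ)

/-- The Hausdorff measure of non-compactness of a set. -/
def hausMNC (A : Set H) : ℝ :=
  sInf {r : ℝ | 0 < r ∧ ∃ F : Finset H, A ⊆ ⋃ c ∈ F, closedBall c r}

/-- `v` is the derivative of the absolutely continuous function `x` on `[0,T]`. -/
def IsACDerivOn {E : Type} [NormedAddCommGroup E] [NormedSpace ℝ E] (T : ℝ)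
    (x v : ℝ → E) : Prop :=
  IntegrableOn v (Icc 0 T) volume ∧ ∀ t ∈ Icc 0 T, x t = x 0 + ∫ s in (0:ℝ)..t, v s

/-- A closed set is uniformly subsmooth. -/
def UniformlySubsmooth {H : Type} [NormedAddCommGroup H] [InnerProductSpace ℝ H]
    (S : Set H) : Prop :=
  ∀ ε > (0:ℝ), ∃ δ > (0:ℝ), ∀ x₁ ∈ S, ∀ x₂ ∈ S, ‖x₁ - x₂‖ < δ →
    ∀ v₁ ∈ clarkeNormalCone S x₁ ∩ closedBall 0 1,
    ∀ v₂ ∈ clarkeNormalCone S x₂ ∩ closedBall 0 1,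
      -ε * ‖x₁ - x₂‖ ≤ (inner ℝ (v₁ - v₂) (x₁ - x₂) : ℝ)

/-! ### Auxiliary lemmas -/

section AuxLemmas

variable {S : Set H}

local notation "⟪" x ", " y "⟫" => @inner ℝ _ _ x y

/-- The base filter in the definition of the Clarke derivative. -/
private abbrev cfil (x : H) : Filter (H × ℝ) := (nhds x) ×ˢ (nhdsWithin 0 (Ioi (0:ℝ)))

/-- The difference quotient appearing in the Clarke derivative. -/
private abbrev cquot (S : Set H) (h : H) : H × ℝ → ℝ :=
  fun p => (infDist (p.1 + p.2 • h) S - infDist p.1 S) / p.2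

instance cfil_neBot (x : H) : (cfil x).NeBot := by
  have : (nhdsWithin (0:ℝ) (Ioi (0:ℝ))).NeBot := nhdsGT_neBot 0
  exact Filter.prod_neBot.2 ⟨inferInstance, this⟩

lemma clarkeDeriv_eq (f : H → ℝ) (x h : H) :
    clarkeDeriv f x h =
      Filter.limsup (fun p : H × ℝ => (f (p.1 + p.2 • h) - f p.1) / p.2) (cfil x) := rfl

omit [InnerProductSpace ℝ H] in
lemma infDist_lip (S : Set H) (a b : H) : |infDist a S - infDist b S| ≤ ‖a - b‖ := by
  have := (lipschitz_infDist_pt S).dist_le_mul a b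
  rwa [Real.dist_eq, dist_eq_norm, NNReal.coe_one, one_mul] at this

lemma cquot_abs_bound (S : Set H) (x h : H) :
    ∀ᶠ p in cfil x, |cquot S h p| ≤ ‖h‖ := by
  have h2 : ∀ᶠ p : H × ℝ in cfil x, p.2 ∈ Ioi (0:ℝ) :=
    Filter.Eventually.prod_inr eventually_mem_nhdsWithin _
  filter_upwards [h2] with p hp
  have hp' : (0:ℝ) < p.2 := hp
  have hl : |infDist (p.1 + p.2 • h) S - infDist p.1 S| ≤ p.2 * ‖h‖ := by
    have := infDist_lip S (p.1 + p.2 • h) p.1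
    simpa [norm_smul, abs_of_pos hp'] using this
  rw [abs_div, abs_of_pos hp', div_le_iff₀ hp']
  linarith [hl]

lemma cquot_boundedUnder_le {F : Filter (H × ℝ)} {h : H} (hle : F ≤ cfil (x := x)) :
    F.IsBoundedUnder (· ≤ ·) (cquot S h) :=
  isBoundedUnder_of_eventually_le (a := ‖h‖)
    ((cquot_abs_bound S x h).filter_mono hle |>.mono fun p hp => (abs_le.1 hp).2)

lemma cquot_coboundedUnder_le {F : Filter (H × ℝ)} [F.NeBot] {h : H}
    (hle : F ≤ cfil (x := x)) : F.IsCoboundedUnder (· ≤ ·) (cquot S h) :=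
  isCoboundedUnder_le_of_eventually_le F (x := -‖h‖)
    ((cquot_abs_bound S x h).filter_mono hle |>.mono fun p hp => (abs_le.1 hp).1)

lemma clarkeDeriv_le_norm (S : Set H) (x h : H) :
    clarkeDeriv (fun u => infDist u S) x h ≤ ‖h‖ := by
  rw [clarkeDeriv_eq]
  exact limsup_le_of_le (cquot_coboundedUnder_le le_rfl)
    ((cquot_abs_bound S x h).mono fun p hp => (abs_le.1 hp).2)

lemma neg_norm_le_clarkeDeriv (S : Set H) (x h : H) :
    -‖h‖ ≤ clarkeDeriv (fun u => infDist u S) x h := by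
  rw [clarkeDeriv_eq]
  exact le_limsup_of_frequently_le
    (((cquot_abs_bound S x h).mono fun p hp => (abs_le.1 hp).1).frequently)
    (cquot_boundedUnder_le le_rfl)

lemma clarkeDeriv_zero_dir (S : Set H) (x : H) :
    clarkeDeriv (fun u => infDist u S) x 0 = 0 :=
  le_antisymm (by simpa using clarkeDeriv_le_norm S x 0)
    (by simpa using neg_norm_le_clarkeDeriv S x 0)

lemma tendsto_shift (x h₂ : H) :
    Filter.Tendsto (fun p : H × ℝ => (p.1 + p.2 • h₂, p.2)) (cfil x) (cfil x) := by
  refine Filter.Tendsto.prodMk ?_ tendsto_snd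
  have c : Continuous (fun p : H × ℝ => p.1 + p.2 • h₂) := by fun_prop
  have h1 : Filter.Tendsto (fun p : H × ℝ => p.1 + p.2 • h₂) (nhds (x, (0:ℝ))) (nhds x) := by
    have := c.tendsto (x, (0:ℝ))
    simpa using this
  refine h1.mono_left ?_
  rw [nhds_prod_eq]
  exact Filter.prod_mono le_rfl nhdsWithin_le_nhds

lemma limsup_comp_le (S : Set H) (x h : H) {ψ : H × ℝ → H × ℝ}
    (hψ : Filter.Tendsto ψ (cfil x) (cfil x)) :
    Filter.limsup (fun p => cquot S h (ψ p)) (cfil x) ≤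
      clarkeDeriv (fun u => infDist u S) x h := by
  have h1 : Filter.limsup (fun p => cquot S h (ψ p)) (cfil x)
      = Filter.limsup (cquot S h) (Filter.map ψ (cfil x)) := by
    rw [Filter.limsup, Filter.limsup, Filter.map_map]; rfl
  rw [clarkeDeriv_eq, h1]
  haveI : (Filter.map ψ (cfil x)).NeBot := Filter.NeBot.map inferInstance ψ
  exact limsup_le_limsup_of_le hψ (cquot_coboundedUnder_le hψ) (cquot_boundedUnder_le le_rfl)

lemma clarkeDeriv_add_le (S : Set H) (x h₁ h₂ : H) :
    clarkeDeriv (fun u => infDist u S) x (h₁ + h₂) ≤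
      clarkeDeriv (fun u => infDist u S) x h₁ + clarkeDeriv (fun u => infDist u S) x h₂ := by
  set ψ : H × ℝ → H × ℝ := fun p => (p.1 + p.2 • h₂, p.2) with hψdef
  have hψ : Filter.Tendsto ψ (cfil x) (cfil x) := tendsto_shift x h₂
  have hpt : ∀ p : H × ℝ, cquot S (h₁ + h₂) p = cquot S h₁ (ψ p) + cquot S h₂ p := by
    intro p
    have e1 : p.1 + p.2 • (h₁ + h₂) = (p.1 + p.2 • h₂) + p.2 • h₁ := by
      rw [smul_add]; abel
    simp only [cquot, hψdef, e1]
    rw [← add_div, sub_add_sub_cancel]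
  have hb1 : (cfil (x := x)).IsBoundedUnder (· ≤ ·) (fun p => cquot S h₁ (ψ p)) :=
    isBoundedUnder_of_eventually_le (a := ‖h₁‖)
      ((hψ.eventually (cquot_abs_bound S x h₁)).mono fun p hp => (abs_le.1 hp).2)
  have hb1' : (cfil (x := x)).IsBoundedUnder (· ≥ ·) (fun p => cquot S h₁ (ψ p)) :=
    isBoundedUnder_of_eventually_ge (a := -‖h₁‖)
      ((hψ.eventually (cquot_abs_bound S x h₁)).mono fun p hp => (abs_le.1 hp).1)
  have hb2 : (cfil (x := x)).IsBoundedUnder (· ≤ ·) (cquot S h₂) :=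
    cquot_boundedUnder_le le_rfl
  have hb2' : (cfil (x := x)).IsCoboundedUnder (· ≤ ·) (cquot S h₂) :=
    cquot_coboundedUnder_le le_rfl
  calc clarkeDeriv (fun u => infDist u S) x (h₁ + h₂)
      = Filter.limsup ((fun p => cquot S h₁ (ψ p)) + cquot S h₂) (cfil x) := by
        rw [clarkeDeriv_eq]
        exact limsup_congr (Filter.Eventually.of_forall fun p => hpt p)
    _ ≤ Filter.limsup (fun p => cquot S h₁ (ψ p)) (cfil x)
          + Filter.limsup (cquot S h₂) (cfil x) :=
        _root_.limsup_add_le hb1' hb1 hb2' hb2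
    _ ≤ _ := by
        have := limsup_comp_le S x h₁ hψ
        rw [clarkeDeriv_eq (fun u => infDist u S) x h₂]
        exact add_le_add this le_rfl

lemma map_mul_nhdsWithin_Ioi {c : ℝ} (hc : 0 < c) :
    Filter.map (fun t : ℝ => c * t) (nhdsWithin 0 (Ioi (0:ℝ))) = nhdsWithin 0 (Ioi (0:ℝ)) := by
  have key : ∀ a : ℝ, 0 < a →
      Filter.map (fun t : ℝ => a * t) (nhdsWithin 0 (Ioi (0:ℝ))) ≤ nhdsWithin 0 (Ioi (0:ℝ)) := by
    intro a ha
    have l1 : Filter.Tendsto (fun t : ℝ => a * t) (nhds 0) (nhds 0) := by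
      simpa using (continuous_mul_left a).tendsto (0:ℝ)
    have l2 : Filter.Tendsto (fun t : ℝ => a * t)
        (Filter.principal (Ioi (0:ℝ))) (Filter.principal (Ioi (0:ℝ))) :=
      Filter.tendsto_principal_principal.2 fun t ht => mul_pos ha ht
    exact Filter.Tendsto.inf l1 l2
  refine le_antisymm (key c hc) ?_
  have h2 := Filter.map_mono (m := fun t : ℝ => c * t) (key c⁻¹ (inv_pos.2 hc))
  rw [Filter.map_map] at h2
  have : ((fun t : ℝ => c * t) ∘ fun t : ℝ => c⁻¹ * t) = id := by
    funext t; simp [hc.ne']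
  rwa [this, Filter.map_id] at h2

lemma clarkeDeriv_smul (S : Set H) (x h : H) {c : ℝ} (hc : 0 < c) :
    clarkeDeriv (fun u => infDist u S) x (c • h) =
      c * clarkeDeriv (fun u => infDist u S) x h := by
  set ψ : H × ℝ → H × ℝ := fun p => (p.1, c * p.2) with hψdef
  have hmap : Filter.map ψ (cfil x) = cfil x := by
    have : ψ = Prod.map id (fun t : ℝ => c * t) := rfl
    rw [this, ← Filter.prod_map_map_eq', Filter.map_id, map_mul_nhdsWithin_Ioi hc]
  have hpt : ∀ p : H × ℝ, cquot S (c • h) p = c * cquot S h (ψ p) := by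
    intro p
    have e1 : p.1 + p.2 • (c • h) = p.1 + (c * p.2) • h := by
      rw [smul_smul, mul_comm]
    simp only [cquot, hψdef, e1]
    rw [← mul_div_assoc, mul_div_mul_left _ _ hc.ne']
  have hboundψ : ∀ᶠ p in cfil x, |cquot S h (ψ p)| ≤ ‖h‖ := by
    rw [← Filter.eventually_map (P := fun q => |cquot S h q| ≤ ‖h‖), hmap]
    exact cquot_abs_bound S x h
  have hub : (cfil (x := x)).IsBoundedUnder (· ≤ ·) (fun p => cquot S h (ψ p)) :=
    isBoundedUnder_of_eventually_le (a := ‖h‖) (hboundψ.mono fun p hp => (abs_le.1 hp).2)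
  have hcob : (cfil (x := x)).IsCoboundedUnder (· ≤ ·) (fun p => cquot S h (ψ p)) :=
    isCoboundedUnder_le_of_eventually_le _ (x := -‖h‖)
      (hboundψ.mono fun p hp => (abs_le.1 hp).1)
  have hub2 : (cfil (x := x)).IsBoundedUnder (· ≤ ·) (fun p => c * cquot S h (ψ p)) :=
    isBoundedUnder_of_eventually_le (a := c * ‖h‖)
      (hboundψ.mono fun p hp => by nlinarith [(abs_le.1 hp).2])
  have hcob2 : (cfil (x := x)).IsCoboundedUnder (· ≤ ·) (fun p => c * cquot S h (ψ p)) :=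
    isCoboundedUnder_le_of_eventually_le _ (x := -(c * ‖h‖))
      (hboundψ.mono fun p hp => by nlinarith [(abs_le.1 hp).1])
  have hiso := (OrderIso.mulLeft₀ c hc).limsup_apply (f := cfil x)
      (u := fun p => cquot S h (ψ p)) hub hcob hub2 hcob2
  have hcomp : Filter.limsup (fun p => cquot S h (ψ p)) (cfil x)
      = Filter.limsup (cquot S h) (Filter.map ψ (cfil x)) := by
    rw [Filter.limsup, Filter.limsup, Filter.map_map]; rfl
  calc clarkeDeriv (fun u => infDist u S) x (c • h)
      = Filter.limsup (fun p => c * cquot S h (ψ p)) (cfil x) := by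
        rw [clarkeDeriv_eq]; exact limsup_congr (Filter.Eventually.of_forall hpt)
    _ = c * Filter.limsup (fun p => cquot S h (ψ p)) (cfil x) := by
        have : (fun p => c * cquot S h (ψ p))
            = fun p => (OrderIso.mulLeft₀ c hc) ((fun p => cquot S h (ψ p)) p) := by
          funext p; rfl
        rw [this, ← hiso]; rfl
    _ = c * clarkeDeriv (fun u => infDist u S) x h := by
        rw [hcomp, hmap, clarkeDeriv_eq]

lemma exists_clarke_subgrad [CompleteSpace H] (S : Set H) (x u : H) (hu : u ≠ 0) :
    ∃ v ∈ clarkeSubdiff (fun w => infDist w S) x, ‖v‖ ≤ 1 ∧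
      clarkeDeriv (fun w => infDist w S) x u = (inner ℝ v u : ℝ) := by
  set N : H → ℝ := clarkeDeriv (fun w => infDist w S) x with hN
  have N_hom : ∀ c : ℝ, 0 < c → ∀ k, N (c • k) = c * N k := fun c hc k =>
    clarkeDeriv_smul S x k hc
  have N_add : ∀ k₁ k₂, N (k₁ + k₂) ≤ N k₁ + N k₂ := fun k₁ k₂ =>
    clarkeDeriv_add_le S x k₁ k₂
  have N_le : ∀ k, N k ≤ ‖k‖ := fun k => clarkeDeriv_le_norm S x k
  have N_ge : ∀ k, -‖k‖ ≤ N k := fun k => neg_norm_le_clarkeDeriv S x k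
  have N_zero : N 0 = 0 := clarkeDeriv_zero_dir S x
  have N_symm : ∀ k, 0 ≤ N k + N (-k) := by
    intro k
    have := N_add k (-k)
    rw [add_neg_cancel, N_zero] at this
    linarith
  set pl : H →ₗ.[ℝ] ℝ := LinearPMap.mkSpanSingleton u (N u) hu with hpl
  have hpl_le : ∀ w : pl.domain, pl w ≤ N w := by
    rintro ⟨w, hw⟩
    rcases Submodule.mem_span_singleton.1 hw with ⟨t, rfl⟩
    have happ : pl ⟨t • u, hw⟩ = t • N u := LinearPMap.mkSpanSingleton'_apply _ _ _ t _
    rw [happ]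
    rcases lt_trichotomy t 0 with ht | rfl | ht
    · have h1 : N (t • u) = (-t) * N (-u) := by
        have : t • u = (-t) • (-u) := by rw [smul_neg, neg_smul, neg_neg]
        rw [this, N_hom (-t) (by linarith) (-u)]
      rw [h1, smul_eq_mul]
      nlinarith [N_symm u]
    · simp [N_zero]
    · rw [N_hom t ht u, smul_eq_mul]
  obtain ⟨g, hg1, hg2⟩ := exists_extension_of_le_sublinear pl N N_hom N_add hpl_le
  have hgu : g u = N u := by
    have h1 := hg1 ⟨u, Submodule.mem_span_singleton_self u⟩
    rw [LinearPMap.mkSpanSingleton_apply] at h1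
    exact h1
  have hbound : ∀ w, |g w| ≤ ‖w‖ := by
    intro w
    rw [abs_le]
    constructor
    · have := (hg2 (-w)).trans (N_le (-w))
      rw [map_neg, norm_neg] at this
      linarith
    · exact (hg2 w).trans (N_le w)
  set G : H →L[ℝ] ℝ := LinearMap.mkContinuous g 1 (fun w => by
    rw [Real.norm_eq_abs, one_mul]; exact hbound w) with hG
  refine ⟨(InnerProductSpace.toDual ℝ H).symm G, fun k => ?_, ?_, ?_⟩
  · rw [InnerProductSpace.toDual_symm_apply]
    exact hg2 k
  · have h1 : ‖(InnerProductSpace.toDual ℝ H).symm G‖ = ‖G‖ :=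
      LinearIsometryEquiv.norm_map _ G
    rw [h1]
    exact LinearMap.mkContinuous_norm_le g zero_le_one _
  · rw [InnerProductSpace.toDual_symm_apply]
    exact hgu.symm

lemma mem_normalCone_of_subdiff {S : Set H} {p v : H}
    (hv : v ∈ clarkeSubdiff (fun u => infDist u S) p) : v ∈ clarkeNormalCone S p := by
  have hmem : v ∈ {w : H | ∃ l : ℝ, ∃ v' ∈ clarkeSubdiff (fun u => infDist u S) p,
      0 ≤ l ∧ w = l • v'} := ⟨1, v, hv, zero_le_one, (one_smul ℝ v).symm⟩
  show (toWeakSpace ℝ H) v ∈ closure ((toWeakSpace ℝ H) '' _)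
  apply subset_closure
  exact mem_image_of_mem _ hmem

lemma norm_add_smul_le (a k : H) (t : ℝ) (ha : a ≠ 0)
    (hY : 0 ≤ ‖a‖ + t * (inner ℝ a k : ℝ) / ‖a‖ + t ^ 2 * ‖k‖ ^ 2 / (2 * ‖a‖)) :
    ‖a + t • k‖ ≤ ‖a‖ + t * (inner ℝ a k : ℝ) / ‖a‖ + t ^ 2 * ‖k‖ ^ 2 / (2 * ‖a‖) := by
  have hA : 0 < ‖a‖ := norm_pos_iff.2 ha
  have hsq : ‖a + t • k‖ ^ 2
      ≤ (‖a‖ + t * (inner ℝ a k : ℝ) / ‖a‖ + t ^ 2 * ‖k‖ ^ 2 / (2 * ‖a‖)) ^ 2 := by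
    rw [norm_add_sq_real, real_inner_smul_right, norm_smul, Real.norm_eq_abs, mul_pow, sq_abs]
    have e1 : ‖a‖ * (t * (inner ℝ a k : ℝ) / ‖a‖) = t * (inner ℝ a k : ℝ) := by field_simp
    have e2 : ‖a‖ * (t ^ 2 * ‖k‖ ^ 2 / (2 * ‖a‖)) = t ^ 2 * ‖k‖ ^ 2 / 2 := by
      field_simp
    nlinarith [sq_nonneg (t * (inner ℝ a k : ℝ) / ‖a‖ + t ^ 2 * ‖k‖ ^ 2 / (2 * ‖a‖))]
  calc ‖a + t • k‖ = Real.sqrt (‖a + t • k‖ ^ 2) := (Real.sqrt_sq (norm_nonneg _)).symm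
    _ ≤ Real.sqrt ((‖a‖ + t * (inner ℝ a k : ℝ) / ‖a‖ + t ^ 2 * ‖k‖ ^ 2 / (2 * ‖a‖)) ^ 2) :=
        Real.sqrt_le_sqrt hsq
    _ = _ := Real.sqrt_sq hY

lemma ekeland_point [CompleteSpace H] (S : Set H) (hcl : IsClosed S) (hne : S.Nonempty)
    (z : H) {σ γ : ℝ} (hσ : 0 < σ) (hγ : 0 < γ) :
    ∃ q ∈ S, ‖z - q‖ ≤ infDist z S + γ ∧
      ∀ u ∈ S, ‖z - q‖ ≤ ‖z - u‖ + σ * ‖u - q‖ := by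
  set g : H → ℝ := fun u => ‖z - u‖ with hg
  have hg0 : ∀ u, 0 ≤ g u := fun u => norm_nonneg _
  set F : H → Set H := fun q => {u ∈ S | g u + σ * ‖u - q‖ ≤ g q} with hF
  have hFS : ∀ q, F q ⊆ S := fun q u hu => hu.1
  have hself : ∀ q ∈ S, q ∈ F q := fun q hq => ⟨hq, by simp⟩
  have htrans : ∀ q, ∀ u ∈ F q, F u ⊆ F q := by
    intro q u hu w hw
    refine ⟨hw.1, ?_⟩
    have h1 : g w + σ * ‖w - u‖ ≤ g u := hw.2
    have h2 : g u + σ * ‖u - q‖ ≤ g q := hu.2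
    have h3 : ‖w - q‖ ≤ ‖w - u‖ + ‖u - q‖ := norm_sub_le_norm_sub_add_norm_sub w u q
    nlinarith
  have hclosedF : ∀ q, IsClosed (F q) := by
    intro q
    have : F q = S ∩ {u | g u + σ * ‖u - q‖ ≤ g q} := rfl
    rw [this]
    exact hcl.inter (isClosed_le (by fun_prop) continuous_const)
  have hBdd : ∀ q, BddBelow (g '' F q) := by
    intro q; exact ⟨0, by rintro _ ⟨u, _, rfl⟩; exact hg0 u⟩
  have hstep : ∀ (n : ℕ), ∀ q, q ∈ S → ∃ q', q' ∈ F q ∧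
      g q' ≤ sInf (g '' F q) + 1 / (n + 1) := by
    intro n q hq
    have hnonempty : (g '' F q).Nonempty := ⟨g q, mem_image_of_mem g (hself q hq)⟩
    obtain ⟨a, ⟨q', hq', rfl⟩, hlt⟩ := Real.lt_sInf_add_pos hnonempty
      (by positivity : (0:ℝ) < 1 / (n + 1))
    exact ⟨q', hq', hlt.le⟩
  choose! next hnext₁ hnext₂ using hstep
  obtain ⟨q₀, hq₀S, hq₀⟩ : ∃ q₀ ∈ S, g q₀ < infDist z S + γ := by
    obtain ⟨u, hu, hd⟩ := (infDist_lt_iff hne).1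
      (lt_add_of_pos_right (infDist z S) hγ)
    exact ⟨u, hu, by simpa [hg, dist_eq_norm] using hd⟩
  set q : ℕ → H := fun n => Nat.rec q₀ (fun n qn => next n qn) n with hqdef
  have hq_succ : ∀ n, q (n + 1) = next n (q n) := fun n => rfl
  have hqS : ∀ n, q n ∈ S := by
    intro n
    induction n with
    | zero => exact hq₀S
    | succ n ih => rw [hq_succ]; exact hFS _ (hnext₁ n _ ih)
  have hmemF : ∀ n, q (n + 1) ∈ F (q n) := fun n => hnext₁ n _ (hqS n)
  have hchain : ∀ n m, n ≤ m → q m ∈ F (q n) := by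
    intro n m hnm
    induction m, hnm using Nat.le_induction with
    | base => exact hself _ (hqS n)
    | succ m hm ih => exact htrans (q n) (q m) ih (hmemF m)
  have gdec : ∀ n m, n ≤ m → g (q m) ≤ g (q n) := by
    intro n m h
    have := (hchain n m h).2
    nlinarith [norm_nonneg (q m - q n), hσ]
  set L : ℝ := ⨅ n, g (q n) with hL
  have hLb : BddBelow (range fun n => g (q n)) := ⟨0, by rintro _ ⟨n, rfl⟩; exact hg0 _⟩
  have hLle : ∀ n, L ≤ g (q n) := fun n => ciInf_le hLb n
  have htendsto : Filter.Tendsto (fun n => g (q n)) Filter.atTop (nhds L) :=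
    tendsto_atTop_ciInf (fun n m h => gdec n m h) hLb
  have hcauchy : CauchySeq q := by
    apply cauchySeq_of_le_tendsto_0 (b := fun n => (g (q n) - L) / σ)
    · intro n m N hn hm
      rcases le_total n m with h | h
      · have h1 := (hchain n m h).2
        have h2 : g (q n) ≤ g (q N) := gdec N n hn
        have h3 : L ≤ g (q m) := hLle m
        rw [dist_eq_norm, ← norm_sub_rev]
        rw [le_div_iff₀ hσ]
        nlinarith
      · have h1 := (hchain m n h).2
        have h2 : g (q m) ≤ g (q N) := gdec N m hm
        have h3 : L ≤ g (q n) := hLle n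
        rw [dist_eq_norm]
        rw [le_div_iff₀ hσ]
        nlinarith
    · have h1 : Filter.Tendsto (fun n => (g (q n) - L) / σ) Filter.atTop
          (nhds ((L - L) / σ)) := ((htendsto.sub tendsto_const_nhds).div_const σ)
      simpa using h1
  obtain ⟨qb, hqb⟩ := cauchySeq_tendsto_of_complete hcauchy
  have hqbS : qb ∈ S := hcl.mem_of_tendsto hqb (Filter.Eventually.of_forall hqS)
  have hqbF : ∀ n, qb ∈ F (q n) := by
    intro n
    refine (hclosedF (q n)).mem_of_tendsto hqb ?_
    filter_upwards [Filter.eventually_ge_atTop n] with m hm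
    exact hchain n m hm
  have hgqb0 : g qb ≤ g q₀ := by
    have h1 := (hqbF 0).2
    have h00 : q 0 = q₀ := rfl
    rw [h00] at h1
    nlinarith [norm_nonneg (qb - q₀), hσ]
  have hgqbL : g qb ≤ L := by
    refine le_ciInf fun n => ?_
    have := (hqbF n).2
    nlinarith [norm_nonneg (qb - q n), hσ]
  refine ⟨qb, hqbS, le_trans hgqb0 hq₀.le, ?_⟩
  intro u hu
  by_contra hcon
  push_neg at hcon
  have huF : u ∈ F qb := ⟨hu, by nlinarith⟩
  have huFn : ∀ n, u ∈ F (q n) := fun n => htrans (q n) qb (hqbF n) huF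
  have hgu : ∀ n : ℕ, sInf (g '' F (q n)) ≤ g u := fun n =>
    csInf_le (hBdd _) (mem_image_of_mem g (huFn n))
  have hkey : ∀ n : ℕ, g (q (n + 1)) - 1 / (n + 1) ≤ g u := by
    intro n
    have := hnext₂ n (q n) (hqS n)
    rw [← hq_succ] at this
    linarith [hgu n]
  have hLu : L ≤ g u := by
    have ht2 : Filter.Tendsto (fun n : ℕ => g (q (n + 1)) - 1 / (n + 1))
        Filter.atTop (nhds (L - 0)) := by
      refine Filter.Tendsto.sub ?_ tendsto_one_div_add_atTop_nhds_zero_nat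
      exact htendsto.comp (Filter.tendsto_add_atTop_nat 1)
    have := le_of_tendsto ht2 (Filter.Eventually.of_forall hkey)
    simpa using this
  nlinarith [norm_nonneg (u - qb), hσ, hgqbL]

set_option maxHeartbeats 1000000 in
lemma clarkeDeriv_ge_at_ekeland (S : Set H) (hne : S.Nonempty) {z q : H} (hq : q ∈ S)
    {σ : ℝ} (hσ : 0 < σ) (hd : 0 < ‖z - q‖)
    (hek : ∀ u ∈ S, ‖z - q‖ ≤ ‖z - u‖ + σ * ‖u - q‖) (k : H) :
    (inner ℝ (z - q) k : ℝ) / ‖z - q‖ - 2 * σ * ‖k‖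
      ≤ clarkeDeriv (fun w => infDist w S) q k := by
  set f : H → ℝ := fun w => infDist w S with hfdef
  set d : ℝ := ‖z - q‖ with hddef
  set C : ℝ := ‖k‖ ^ 2 / (2 * d) + σ + 1 with hCdef
  set t₀ : ℝ := d / (2 * (‖k‖ + 1)) with ht₀def
  set X : ℝ := (inner ℝ (z - q) k : ℝ) / d - 2 * σ * ‖k‖ with hXdef
  have hC : 0 < C := by positivity
  have ht₀ : 0 < t₀ := by positivity
  have hinner : |(inner ℝ (z - q) k : ℝ)| ≤ d * ‖k‖ := abs_real_inner_le_norm _ _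
  have main : ∀ t : ℝ, 0 < t → t ≤ t₀ → X - C * t ≤ cquot S k (q, t) := by
    intro t ht1 ht2
    have fq0 : f q = 0 := infDist_zero_of_mem hq
    have fle : f (q + t • k) ≤ t * ‖k‖ := by
      have := infDist_le_dist_of_mem (x := q + t • k) hq
      simpa [dist_eq_norm, norm_smul, abs_of_pos ht1] using this
    obtain ⟨u, huS, hud⟩ := (infDist_lt_iff hne).1
      (lt_add_of_pos_right (f (q + t • k)) (by positivity : (0:ℝ) < t ^ 2))
    have hnu : ‖q + t • k - u‖ ≤ f (q + t • k) + t ^ 2 := by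
      rw [← dist_eq_norm]; exact hud.le
    have hu1 : ‖u - q‖ ≤ 2 * t * ‖k‖ + t ^ 2 := by
      have e : u - q = -(q + t • k - u) + t • k := by abel
      calc ‖u - q‖ ≤ ‖q + t • k - u‖ + ‖t • k‖ := by
            rw [e]
            refine le_trans (norm_add_le _ _) ?_
            rw [norm_neg]
          _ ≤ (f (q + t • k) + t ^ 2) + t * ‖k‖ := by
            rw [norm_smul, Real.norm_eq_abs, abs_of_pos ht1]
            exact add_le_add hnu le_rfl
          _ ≤ 2 * t * ‖k‖ + t ^ 2 := by nlinarith
    have htk : t * ‖k‖ ≤ d / 2 := by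
      have hk1 : (0:ℝ) < 2 * (‖k‖ + 1) := by positivity
      have h5 := (le_div_iff₀ hk1).1 ht2
      nlinarith [norm_nonneg k]
    have h2 : ‖z - q - t • k‖ ≤ d + (-t) * (inner ℝ (z - q) k : ℝ) / d
        + (-t) ^ 2 * ‖k‖ ^ 2 / (2 * d) := by
      have e : z - q - t • k = (z - q) + (-t) • k := by
        rw [neg_smul]; abel
      rw [e]
      have ha : z - q ≠ 0 := by
        rw [hddef] at hd; exact norm_pos_iff.1 hd
      apply norm_add_smul_le (z - q) k (-t) ha
      have hterm : -(d / 2) ≤ -t * (inner ℝ (z - q) k : ℝ) / d := by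
        have e5 : -t * (inner ℝ (z - q) k : ℝ) / d
            = -(t * (inner ℝ (z - q) k : ℝ) / d) := by ring
        rw [e5, neg_le_neg_iff, div_le_iff₀ hd]
        calc t * (inner ℝ (z - q) k : ℝ) ≤ t * (d * ‖k‖) := by nlinarith [abs_le.1 hinner]
          _ ≤ d / 2 * d := by nlinarith
      have : 0 ≤ (-t) ^ 2 * ‖k‖ ^ 2 / (2 * d) := by positivity
      nlinarith
    have h3 : d ≤ ‖z - u‖ + σ * ‖u - q‖ := hek u huS
    have h4 : ‖z - u‖ ≤ ‖z - q - t • k‖ + ‖q + t • k - u‖ := by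
      have e : z - u = (z - q - t • k) + (q + t • k - u) := by abel
      rw [e]; exact norm_add_le _ _
    have hlow : t * ((inner ℝ (z - q) k : ℝ) / d) - 2 * σ * t * ‖k‖ - C * t ^ 2
        ≤ f (q + t • k) := by
      have hC2 : C * t ^ 2 = t ^ 2 * ‖k‖ ^ 2 / (2 * d) + σ * t ^ 2 + t ^ 2 := by
        rw [hCdef]; ring
      have hd' : t * ((inner ℝ (z - q) k : ℝ) / d) = t * (inner ℝ (z - q) k : ℝ) / d := by ring
      have h6 : σ * ‖u - q‖ ≤ σ * (2 * t * ‖k‖ + t ^ 2) :=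
        mul_le_mul_of_nonneg_left hu1 hσ.le
      have hsum : d ≤ (d + (-t) * (inner ℝ (z - q) k : ℝ) / d + (-t) ^ 2 * ‖k‖ ^ 2 / (2 * d))
          + (f (q + t • k) + t ^ 2) + σ * (2 * t * ‖k‖ + t ^ 2) := by
        linarith [h3, h4, h2, hnu, h6]
      have e3 : (-t) * (inner ℝ (z - q) k : ℝ) / d = -(t * (inner ℝ (z - q) k : ℝ) / d) := by
        ring
      rw [e3] at hsum
      have e4 : ((-t):ℝ) ^ 2 = t ^ 2 := by ring
      rw [e4] at hsum
      rw [hC2, hd']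
      linarith
    show X - C * t ≤ (f ((q, t).1 + (q, t).2 • k) - f (q, t).1) / (q, t).2
    simp only [fq0, sub_zero]
    rw [le_div_iff₀ ht1]
    have hXle : (X - C * t) * t
        = t * ((inner ℝ (z - q) k : ℝ) / d) - 2 * σ * t * ‖k‖ - C * t ^ 2 := by
      rw [hXdef]; ring
    rw [hXle]
    exact hlow
  refine le_of_forall_pos_le_add fun η hη => ?_
  have hfreq : ∃ᶠ p in cfil q, X - η ≤ cquot S k p := by
    have hmem : Ioc (0:ℝ) (min t₀ (η / C)) ∈ nhdsWithin 0 (Ioi (0:ℝ)) :=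
      Ioc_mem_nhdsGT_of_mem ⟨le_refl 0, by positivity⟩
    have hev : ∀ᶠ t in nhdsWithin 0 (Ioi (0:ℝ)), X - η ≤ cquot S k (q, t) := by
      filter_upwards [hmem] with t ht
      have ht1 : 0 < t := ht.1
      have ht2 : t ≤ t₀ := le_trans ht.2 (min_le_left _ _)
      have ht3 : C * t ≤ η := by
        have := le_trans ht.2 (min_le_right _ _)
        rw [le_div_iff₀ hC] at this
        linarith
      have := main t ht1 ht2
      linarith
    have hι : Filter.Tendsto (fun t : ℝ => ((q : H), t)) (nhdsWithin 0 (Ioi (0:ℝ)))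
        (cfil q) := Filter.Tendsto.prodMk tendsto_const_nhds Filter.tendsto_id
    have hfr : ∃ᶠ p in Filter.map (fun t : ℝ => ((q : H), t)) (nhdsWithin 0 (Ioi (0:ℝ))),
        X - η ≤ cquot S k p := Filter.frequently_map.2 hev.frequently
    exact hfr.filter_mono hι
  have hlim := le_limsup_of_frequently_le hfreq (cquot_boundedUnder_le (x := q) le_rfl)
  rw [clarkeDeriv_eq]
  calc X ≤ (X - η) + η := by linarith
    _ ≤ _ + η := by
      exact add_le_add hlim le_rfl

/-- Norm-one direction to an Ekeland quasi-projection point. -/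
lemma unit_dir_norm {y p : H} (hd : 0 < ‖y - p‖) : ‖(‖y - p‖⁻¹ • (y - p))‖ = 1 := by
  rw [norm_smul, Real.norm_eq_abs, abs_of_pos (inv_pos.2 hd), inv_mul_cancel₀ hd.ne']

/-- Package: at an Ekeland point, there is an almost-aligned unit subgradient. -/
lemma exists_aligned_subgrad [CompleteSpace H] (S : Set H) (hne : S.Nonempty)
    {z q : H} (hq : q ∈ S) {σ : ℝ} (hσ : 0 < σ) (hd : 0 < ‖z - q‖)
    (hek : ∀ u ∈ S, ‖z - q‖ ≤ ‖z - u‖ + σ * ‖u - q‖) :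
    ∃ v ∈ clarkeSubdiff (fun w => infDist w S) q, ‖v‖ ≤ 1 ∧
      1 - 2 * σ ≤ (inner ℝ v (‖z - q‖⁻¹ • (z - q)) : ℝ) ∧
      ‖(‖z - q‖⁻¹ • (z - q)) - v‖ ^ 2 ≤ 4 * σ := by
  set u : H := ‖z - q‖⁻¹ • (z - q) with hu
  have hun : ‖u‖ = 1 := unit_dir_norm hd
  have hune : u ≠ 0 := fun h0 => by rw [h0, norm_zero] at hun; norm_num at hun
  obtain ⟨v, hv, hvn, hvd⟩ := exists_clarke_subgrad S q u hune
  have hlow := clarkeDeriv_ge_at_ekeland S hne hq hσ hd hek u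
  have hiu : (inner ℝ (z - q) u : ℝ) = ‖z - q‖ := by
    rw [hu, real_inner_smul_right, real_inner_self_eq_norm_sq]
    field_simp
  have h1 : 1 - 2 * σ ≤ (inner ℝ v u : ℝ) := by
    rw [← hvd]
    have e : (inner ℝ (z - q) u : ℝ) / ‖z - q‖ - 2 * σ * ‖u‖ = 1 - 2 * σ := by
      rw [hiu, hun, div_self hd.ne']; ring
    rw [e] at hlow
    exact hlow
  refine ⟨v, hv, hvn, h1, ?_⟩
  have hexp : ‖u - v‖ ^ 2 = ‖u‖ ^ 2 - 2 * (inner ℝ u v : ℝ) + ‖v‖ ^ 2 := norm_sub_sq_real u v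
  have hcomm : (inner ℝ u v : ℝ) = (inner ℝ v u : ℝ) := real_inner_comm v u
  rw [hcomm] at hexp
  have hv1 : ‖v‖ ^ 2 ≤ 1 := by nlinarith [norm_nonneg v]
  rw [hexp, hun]
  nlinarith

private lemma angle_arith {dp dq r β s c : ℝ} (hβpos : 0 ≤ β)
    (hm : (dp + dq) * (1 - c) ≤ 2 * β + 5 * s * (β + dp + dq))
    (hβ : β ≤ s * r) (hs : 0 < s) (hs5 : 5 * s ≤ 1) (hr : 0 < r) (hA : r ≤ dp + dq) :
    1 - c ≤ 8 * s := by
  have hA0 : 0 < dp + dq := lt_of_lt_of_le hr hA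
  have hβ0 : β ≤ s * (dp + dq) := by nlinarith
  have hb1 : 5 * s * β ≤ β := by nlinarith
  have hb2 : 3 * β ≤ 3 * (s * (dp + dq)) := by linarith
  have h9 : (1 - c) * (dp + dq) ≤ (8 * s) * (dp + dq) := by nlinarith
  exact le_of_mul_le_mul_right h9 hA0

set_option maxHeartbeats 1000000 in
theorem main_aux [CompleteSpace H] (S : Set H) (hne : S.Nonempty) (hcl : IsClosed S)
    (hsub : UniformlySubsmooth S) :
    ∀ ε : ℝ, 0 < ε → ε < 1 → ∃ ρ : ℝ, 0 < ρ ∧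
      ∀ y : H, 0 < infDist y S → infDist y S < ρ →
        Real.sqrt (1 - ε) ≤ infDist (0:H) (clarkeSubdiff (fun u => infDist u S) y) := by
  intro ε hε0 hε1
  set f : H → ℝ := fun u => infDist u S with hfdef
  set s : ℝ := ε / 100 with hsdef
  have hs0 : 0 < s := by rw [hsdef]; linarith
  have hs1 : s ≤ 1 := by rw [hsdef]; linarith
  have hs5 : 5 * s ≤ 1 := by rw [hsdef]; linarith
  set σ : ℝ := s ^ 2 with hσdef
  have hσ0 : 0 < σ := by rw [hσdef]; positivity
  have hσs : σ ≤ s := by rw [hσdef]; nlinarith only [hs0, hs1]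
  have hσ1 : σ ≤ 1 := le_trans hσs hs1
  obtain ⟨δ, hδ0, hsubs⟩ := hsub s hs0
  set ρ : ℝ := min (δ / 8) 1 with hρdef
  have hρ0 : 0 < ρ := lt_min (by linarith) one_pos
  have hρδ : ρ ≤ δ / 8 := min_le_left _ _
  have hρ1 : ρ ≤ 1 := min_le_right _ _
  refine ⟨ρ, hρ0, ?_⟩
  intro y hy0 hyρ
  set r : ℝ := infDist y S with hrdef
  obtain ⟨p, hpS, hpd, hpek⟩ := ekeland_point S hcl hne y hσ0
    (mul_pos hσ0 hy0 : (0:ℝ) < σ * r)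
  have hdp0 : 0 < ‖y - p‖ := by
    refine lt_of_lt_of_le hy0 ?_
    rw [hrdef, ← dist_eq_norm]
    exact infDist_le_dist_of_mem hpS
  set dp : ℝ := ‖y - p‖ with hdpdef
  set up : H := dp⁻¹ • (y - p) with hupdef
  have hupn : ‖up‖ = 1 := unit_dir_norm hdp0
  obtain ⟨vp, hvpS, hvpn, hvpu, hvpd⟩ := exists_aligned_subgrad S hne hpS hσ0 hdp0 hpek
  have hdpr : r ≤ dp := by
    rw [hdpdef, hrdef, ← dist_eq_norm]
    exact infDist_le_dist_of_mem hpS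
  have hdpρ : dp ≤ 2 * ρ := by
    have h1 : σ * r ≤ r := by nlinarith only [hσ1, hy0, hσ0]
    linarith only [hpd, h1, hyρ]
  -- the key directional estimate
  have key : clarkeDeriv f y (-up) ≤ -(1 - ε / 2) := by
    set β : ℝ := min (r / 4) (s * r) with hβdef
    have hβ0 : 0 < β := lt_min (by linarith) (mul_pos hs0 hy0)
    have hβr4 : β ≤ r / 4 := min_le_left _ _
    have hβsr : β ≤ s * r := min_le_right _ _
    have hβρ : β < ρ := lt_of_le_of_lt (le_trans hβr4 (by linarith)) hyρ
    rw [clarkeDeriv_eq]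
    refine limsup_le_of_le (cquot_coboundedUnder_le le_rfl) ?_
    have hmem : (ball y β) ×ˢ (Ioo (0:ℝ) β) ∈ cfil y :=
      Filter.prod_mem_prod (Metric.ball_mem_nhds y hβ0)
        (Ioo_mem_nhdsGT_of_mem ⟨le_refl 0, hβ0⟩)
    filter_upwards [hmem] with pz hpz
    obtain ⟨hz, ht⟩ := hpz
    set z : H := pz.1 with hzdef
    set t : ℝ := pz.2 with htdef
    have hzy : ‖z - y‖ < β := by
      rw [← dist_eq_norm]; exact mem_ball.1 hz
    have ht0 : 0 < t := ht.1
    have htβ : t < β := ht.2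
    have ht1 : t ≤ 1 := le_trans htβ.le (le_trans hβρ.le hρ1)
    have hdzr : r - β ≤ infDist z S := by
      have h1 := abs_le.1 (infDist_lip S z y)
      rw [← hrdef] at h1
      linarith only [hzy.le, h1.1]
    have hdzr' : infDist z S ≤ r + β := by
      have h1 := abs_le.1 (infDist_lip S z y)
      rw [← hrdef] at h1
      linarith only [hzy.le, h1.2]
    have hdz0 : 0 < infDist z S := by
      have : 0 < r - β := by linarith only [hβr4, hy0]
      linarith only [this, hdzr]
    obtain ⟨q, hqS, hqd, hqek⟩ := ekeland_point S hcl hne z hσ0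
      (by positivity : (0:ℝ) < σ * t ^ 2)
    have hdq0' : infDist z S ≤ ‖z - q‖ := by
      rw [← dist_eq_norm]; exact infDist_le_dist_of_mem hqS
    have hdq0 : 0 < ‖z - q‖ := lt_of_lt_of_le hdz0 hdq0'
    set dq : ℝ := ‖z - q‖ with hdqdef
    set uq : H := dq⁻¹ • (z - q) with huqdef
    have huqn : ‖uq‖ = 1 := unit_dir_norm hdq0
    obtain ⟨vq, hvqS, hvqn, hvqu, hvqd⟩ := exists_aligned_subgrad S hne hqS hσ0 hdq0 hqek
    -- size bounds
    have htρ : σ * t ^ 2 ≤ ρ := by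
      have h2 : t ^ 2 ≤ t := by nlinarith only [ht0, ht1]
      have h3 : σ * t ^ 2 ≤ t ^ 2 := by nlinarith only [hσ1, hσ0, sq_nonneg t]
      have h4 : t ≤ ρ := le_trans htβ.le hβρ.le
      linarith only [h2, h3, h4]
    have hdqρ : dq ≤ 3 * ρ := by
      linarith only [hqd, hdzr', htρ, hyρ, hβρ]
    have hpq_lt : ‖p - q‖ < δ := by
      have e : p - q = -(y - p) + (y - z) + (z - q) := by abel
      have h1 : ‖p - q‖ ≤ ‖y - p‖ + ‖y - z‖ + ‖z - q‖ := by
        rw [e]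
        refine le_trans (norm_add_le _ _) ?_
        have h2 := norm_add_le (-(y - p)) (y - z)
        rw [norm_neg] at h2
        linarith only [h2]
      have h2 : ‖y - z‖ < β := by rw [norm_sub_rev]; exact hzy
      rw [← hdpdef, ← hdqdef] at h1
      linarith only [h1, h2, hdpρ, hdqρ, hβρ, hρδ, hρ0]
    -- subsmoothness
    have hvpN : vp ∈ clarkeNormalCone S p ∩ closedBall 0 1 :=
      ⟨mem_normalCone_of_subdiff hvpS, by rwa [mem_closedBall_zero_iff]⟩
    have hvqN : vq ∈ clarkeNormalCone S q ∩ closedBall 0 1 :=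
      ⟨mem_normalCone_of_subdiff hvqS, by rwa [mem_closedBall_zero_iff]⟩
    have hss := hsubs p hpS q hqS hpq_lt vp hvpN vq hvqN
    -- almost-alignment of up/uq with vp/vq
    have hsq4 : (2 * s) ^ 2 = 4 * σ := by rw [hσdef]; ring
    have hupvp : ‖up - vp‖ ≤ 2 * s := by
      calc ‖up - vp‖ = Real.sqrt (‖up - vp‖ ^ 2) := (Real.sqrt_sq (norm_nonneg _)).symm
        _ ≤ Real.sqrt ((2 * s) ^ 2) := Real.sqrt_le_sqrt (by linarith only [hvpd, hsq4.le, hsq4.ge])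
        _ = 2 * s := Real.sqrt_sq (by linarith only [hs0])
    have huqvq : ‖uq - vq‖ ≤ 2 * s := by
      calc ‖uq - vq‖ = Real.sqrt (‖uq - vq‖ ^ 2) := (Real.sqrt_sq (norm_nonneg _)).symm
        _ ≤ Real.sqrt ((2 * s) ^ 2) := Real.sqrt_le_sqrt (by linarith only [hvqd, hsq4.le, hsq4.ge])
        _ = 2 * s := Real.sqrt_sq (by linarith only [hs0])
    -- transfer subsmoothness inequality to up/uq
    have htransfer : -(5 * s * ‖p - q‖) ≤ (inner ℝ (up - uq) (p - q) : ℝ) := by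
      have hdiff : up - uq = (vp - vq) + ((up - vp) - (uq - vq)) := by abel
      have hsplit : (inner ℝ (up - uq) (p - q) : ℝ)
          = (inner ℝ (vp - vq) (p - q) : ℝ) + (inner ℝ ((up - vp) - (uq - vq)) (p - q) : ℝ) := by
        rw [hdiff, inner_add_left]
      have habs : |(inner ℝ ((up - vp) - (uq - vq)) (p - q) : ℝ)|
          ≤ ‖(up - vp) - (uq - vq)‖ * ‖p - q‖ := abs_real_inner_le_norm _ _
      have hnw : ‖(up - vp) - (uq - vq)‖ ≤ 4 * s := by
        refine le_trans (norm_sub_le _ _) ?_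
        linarith only [hupvp, huqvq]
      have hprod := mul_le_mul_of_nonneg_right hnw (norm_nonneg (p - q))
      have h2 : -(4 * s * ‖p - q‖) ≤ (inner ℝ ((up - vp) - (uq - vq)) (p - q) : ℝ) := by
        linarith only [(abs_le.1 habs).1, hprod]
      have h3 : -(s * ‖p - q‖) ≤ (inner ℝ (vp - vq) (p - q) : ℝ) := by
        have := hss
        linarith only [this]
      rw [hsplit]
      linarith only [h2, h3]
    -- inner product algebra
    have hdpu : dp • up = y - p := by
      rw [hupdef, smul_smul, mul_inv_cancel₀ hdp0.ne', one_smul]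
    have hdqu : dq • uq = z - q := by
      rw [huqdef, smul_smul, mul_inv_cancel₀ hdq0.ne', one_smul]
    have hpq_e : p - q = (y - z) - (dp • up - dq • uq) := by
      rw [hdpu, hdqu]; abel
    have hupup : (inner ℝ up up : ℝ) = 1 := by
      rw [real_inner_self_eq_norm_sq, hupn]; norm_num
    have huquq : (inner ℝ uq uq : ℝ) = 1 := by
      rw [real_inner_self_eq_norm_sq, huqn]; norm_num
    set c : ℝ := (inner ℝ up uq : ℝ) with hcdef
    have hexp : (inner ℝ (up - uq) (p - q) : ℝ)
        = (inner ℝ (up - uq) (y - z) : ℝ) - (dp + dq) * (1 - c) := by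
      rw [hpq_e]
      simp only [inner_sub_left, inner_sub_right, real_inner_smul_right,
        real_inner_smul_left, hupup, huquq, real_inner_comm up uq, ← hcdef]
      ring
    have hc1 : c ≤ 1 := by
      have h1 := real_inner_le_norm up uq
      rw [hupn, huqn] at h1
      linarith only [h1]
    have hyz : ‖y - z‖ ≤ β := by rw [norm_sub_rev]; exact hzy.le
    have hiyz : (inner ℝ (up - uq) (y - z) : ℝ) ≤ 2 * β := by
      have habs := abs_real_inner_le_norm (up - uq) (y - z)
      have hn2 : ‖up - uq‖ ≤ 2 := by
        refine le_trans (norm_sub_le _ _) ?_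
        rw [hupn, huqn]; norm_num
      have hprod := mul_le_mul hn2 hyz (norm_nonneg _) (by norm_num)
      linarith only [(abs_le.1 habs).2, hprod]
    have hpqn : ‖p - q‖ ≤ β + dp + dq := by
      rw [hpq_e]
      refine le_trans (norm_sub_le _ _) ?_
      have e1 : ‖dp • up‖ = dp := by
        rw [norm_smul, hupn, Real.norm_eq_abs, abs_of_pos hdp0, mul_one]
      have e2 : ‖dq • uq‖ = dq := by
        rw [norm_smul, huqn, Real.norm_eq_abs, abs_of_pos hdq0, mul_one]
      have h2 : ‖dp • up - dq • uq‖ ≤ dp + dq := by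
        refine le_trans (norm_sub_le _ _) ?_
        rw [e1, e2]
      linarith only [hyz, h2]
    have hdqr : 3 * (r / 4) ≤ dq := by
      have h1 : r - β ≤ dq := le_trans hdzr hdq0'
      linarith only [h1, hβr4]
    -- angle estimate
    have hangle : 1 - c ≤ 8 * s := by
      refine angle_arith (dp := dp) (dq := dq) hβ0.le ?_ hβsr hs0 hs5 hy0 ?_
      · have h1 : (dp + dq) * (1 - c) ≤ 2 * β + 5 * s * ‖p - q‖ := by
          rw [hexp] at htransfer
          linarith only [htransfer, hiyz]
        have h2 : 5 * s * ‖p - q‖ ≤ 5 * s * (β + dp + dq) :=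
          mul_le_mul_of_nonneg_left hpqn (by linarith only [hs0])
        linarith only [h1, h2]
      · linarith only [hdpr, hdqr, hy0]
    -- final quotient estimate
    show (f (z + t • (-up)) - f z) / t ≤ -(1 - ε / 2)
    rw [div_le_iff₀ ht0]
    have hfz1 : f (z + t • (-up)) ≤ ‖(z - q) + t • (-up)‖ := by
      have e2 : z + t • (-up) - q = (z - q) + t • (-up) := by abel
      have h1 := infDist_le_dist_of_mem (x := z + t • (-up)) hqS
      rw [dist_eq_norm, e2] at h1
      exact h1
    have hiqh : (inner ℝ (z - q) (-up) : ℝ) = dq * (-c) := by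
      rw [← hdqu]
      simp only [inner_neg_right, real_inner_smul_left, real_inner_smul_right,
        real_inner_comm up uq, ← hcdef]
      ring
    have htc : t * (1 - 8 * s) ≤ t * c :=
      mul_le_mul_of_nonneg_left (by linarith only [hangle]) ht0.le
    have htc1 : t * c ≤ t := by
      have := mul_le_mul_of_nonneg_left hc1 ht0.le
      linarith only [this]
    have hquad : ‖(z - q) + t • (-up)‖
        ≤ dq + t * (inner ℝ (z - q) (-up) : ℝ) / dq + t ^ 2 * ‖(-up)‖ ^ 2 / (2 * dq) := by
      apply norm_add_smul_le (z - q) (-up) t (by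
        intro h0
        rw [hdqdef] at hdq0
        rw [h0, norm_zero] at hdq0
        exact lt_irrefl 0 hdq0)
      rw [hiqh, norm_neg, hupn]
      have e3 : t * (dq * -c) / dq = -(t * c) := by
        field_simp
      rw [e3]
      have hq2 : 0 ≤ t ^ 2 * (1:ℝ) ^ 2 / (2 * dq) := by positivity
      linarith only [htc1, hdqr, hβr4, htβ, hq2, hy0]
    have hfz2 : dq - σ * t ^ 2 ≤ f z := by
      have h1 := hqd
      have hfz : f z = infDist z S := rfl
      rw [hfz]
      linarith only [h1]
    have hiqh2 : t * (inner ℝ (z - q) (-up) : ℝ) / dq = -(t * c) := by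
      rw [hiqh]; field_simp
    have hquad2 : ‖(z - q) + t • (-up)‖ ≤ dq - t * c + t ^ 2 / (2 * dq) := by
      rw [hiqh2, norm_neg, hupn] at hquad
      have e4 : t ^ 2 * (1:ℝ) ^ 2 / (2 * dq) = t ^ 2 / (2 * dq) := by ring
      rw [e4] at hquad
      linarith only [hquad]
    have hquadr : t ^ 2 / (2 * dq) ≤ s * t := by
      rw [div_le_iff₀ (by linarith only [hdqr, hy0] : (0:ℝ) < 2 * dq)]
      have h1 : t ≤ s * r := le_trans htβ.le hβsr
      have h2 : r ≤ 2 * dq := by linarith only [hdqr, hy0]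
      have a1 := mul_le_mul_of_nonneg_left h1 ht0.le
      have a2 := mul_le_mul_of_nonneg_left h2 (mul_nonneg hs0.le ht0.le)
      have e5 : t * (s * r) = s * t * r := by ring
      rw [e5] at a1
      calc t ^ 2 = t * t := sq t
        _ ≤ s * t * r := a1
        _ ≤ s * t * (2 * dq) := a2
    have hσt : σ * t ^ 2 ≤ s * t := by
      have hst1 : s * t ≤ 1 := by nlinarith only [hs1, ht1, hs0, ht0]
      have hst0 : 0 ≤ s * t := mul_nonneg hs0.le ht0.le
      rw [hσdef]
      nlinarith only [hst1, hst0]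
    have h10 : 10 * s ≤ ε / 2 := by rw [hsdef]; linarith only [hε0]
    have hp1 := mul_le_mul_of_nonneg_left h10 ht0.le
    have hchain := le_trans hfz1 hquad2
    have hgoal : f (z + t • (-up)) - f z ≤ -(1 - ε / 2) * t := by
      nlinarith only [hchain, hquadr, hσt, hfz2, htc, hp1]
    linarith only [hgoal]
  -- conclude
  have hsqrt : Real.sqrt (1 - ε) ≤ 1 - ε / 2 := by
    have h1 : 1 - ε ≤ (1 - ε / 2) ^ 2 := by nlinarith only [hε0, hε1]
    calc Real.sqrt (1 - ε) ≤ Real.sqrt ((1 - ε / 2) ^ 2) := Real.sqrt_le_sqrt h1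
      _ = 1 - ε / 2 := Real.sqrt_sq (by linarith only [hε1])
  have hlb : ∀ v ∈ clarkeSubdiff f y, 1 - ε / 2 ≤ dist (0:H) v := by
    intro v hv
    have h1 := hv (-up)
    have h2 : (inner ℝ v (-up) : ℝ) = -(inner ℝ v up : ℝ) := inner_neg_right v up
    have h3 : 1 - ε / 2 ≤ (inner ℝ v up : ℝ) := by
      rw [h2] at h1
      have h5 := le_trans h1 key
      linarith only [h5]
    have h4 : (inner ℝ v up : ℝ) ≤ ‖v‖ := by
      have h6 := real_inner_le_norm v up
      rw [hupn] at h6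
      linarith only [h6]
    rw [dist_eq_norm, zero_sub, norm_neg]
    linarith only [h3, h4]
  have hnonempty : (clarkeSubdiff f y).Nonempty := by
    have hune : up ≠ 0 := fun h0 => by rw [h0, norm_zero] at hupn; norm_num at hupn
    obtain ⟨v, hv, -, -⟩ := exists_clarke_subgrad S y up hune
    exact ⟨v, hv⟩
  by_contra hcon
  push_neg at hcon
  have hlt : infDist (0:H) (clarkeSubdiff f y) < 1 - ε / 2 := lt_of_lt_of_le hcon hsqrt
  obtain ⟨v, hv, hvd⟩ := (infDist_lt_iff hnonempty).1 hlt
  exact absurd hvd (not_lt.2 (hlb v hv))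

end AuxLemmas

/-- Proposition 2.1: a uniformly subsmooth set is positively `√(1−ε)`-far for
every `ε ∈ (0,1)`. -/
theorem uniformly_subsmooth_far
    {H : Type} [NormedAddCommGroup H] [InnerProductSpace ℝ H] [CompleteSpace H]
    [TopologicalSpace.SeparableSpace H]
    (S : Set H) (hne : S.Nonempty) (hcl : IsClosed S) (hSne : S ≠ univ)
    (hsub : UniformlySubsmooth S) :
    ∀ ε : ℝ, 0 < ε → ε < 1 → ∃ ρ : ℝ, 0 < ρ ∧
      ∀ y : H, 0 < infDist y S → infDist y S < ρ →
        Real.sqrt (1 - ε) ≤ infDist (0:H) (clarkeSubdiff (fun u => infDist u S) y) := by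
  exact main_aux S hne hcl hsub

end
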